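/- If Z ~ N(0, σ²) with σ² ≤ 1, then for every α ∈ [0,1], P(2Φ(−|Z|) ≤ α) ≤ α, i.e., the p-value 2Φ(−|Z|) is super-uniform. -/

import Mathlib

open MeasureTheory ProbabilityTheory Set Filter Function
open scoped NNReal ENNReal Topology

noncomputable def stdGauss : Measure ℝ := gaussianReal 0 1

lemma stdGauss_noAtoms : ∀ x : ℝ, stdGauss {x} = 0 := fun _ =>
  (gaussianReal_absolutelyContinuous 0 one_ne_zero) (Real.volume_singleton)

instance : NullSingletonClass stdGauss := ⟨stdGauss_noAtoms⟩
instance : IsProbabilityMeasure stdGauss := by unfold stdGauss; infer_instance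

lemma stdGauss_pos {s : Set ℝ} (hs : volume s ≠ 0) : 0 < stdGauss s := by
  rw [pos_iff_ne_zero]
  intro h
  exact hs ((gaussianReal_absolutelyContinuous' 0 one_ne_zero) h)

lemma Phi_strictMono : StrictMono (cdf stdGauss) := by
  intro a b hab
  rw [cdf_eq_real, cdf_eq_real, measureReal_def, measureReal_def]
  have h1 : stdGauss (Iic a) + stdGauss (Ioc a b) = stdGauss (Iic b) := by
    rw [← measure_union (Iic_disjoint_Ioc le_rfl) measurableSet_Ioc, Iic_union_Ioc_eq_Iic hab.le]
  have h2 : 0 < stdGauss (Ioc a b) := by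
    apply stdGauss_pos
    simp [Real.volume_Ioc, hab]
  have : stdGauss (Iic a) < stdGauss (Iic b) := by
    rw [← h1]; exact ENNReal.lt_add_right (measure_ne_top _ _) h2.ne'
  exact ENNReal.toReal_strict_mono (measure_ne_top _ _) this

lemma Phi_continuous : Continuous (cdf stdGauss) := by
  rw [continuous_iff_continuousAt]
  intro x
  have hmono : Monotone (cdf stdGauss) := monotone_cdf stdGauss
  rw [hmono.continuousAt_iff_leftLim_eq_rightLim]
  have hr : rightLim (cdf stdGauss) x = cdf stdGauss x := by
    rw [← hmono.continuousWithinAt_Ioi_iff_rightLim_eq]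
    exact ((cdf stdGauss).right_continuous x).mono Ioi_subset_Ici_self
  have hl : leftLim (cdf stdGauss) x = cdf stdGauss x := by
    have h0 : (cdf stdGauss).measure {x} = 0 := by rw [measure_cdf]; exact stdGauss_noAtoms x
    rw [StieltjesFunction.measure_singleton] at h0
    exact le_antisymm (hmono.leftLim_le le_rfl)
      (by linarith [(ENNReal.ofReal_eq_zero.mp h0)] : cdf stdGauss x ≤ leftLim (cdf stdGauss) x)
  rw [hl, hr]

lemma stdGauss_symm (x : ℝ) : stdGauss (Iic (-x)) = stdGauss (Ici x) := by
  have hmap : Measure.map (fun y : ℝ => (-1 : ℝ) * y) stdGauss = stdGauss := by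
    unfold stdGauss
    rw [gaussianReal_map_const_mul (-1)]
    norm_num
  conv_lhs => rw [← hmap]
  rw [Measure.map_apply (measurable_const_mul _) measurableSet_Iic]
  congr 1
  ext y
  simp only [mem_preimage, mem_Iic, mem_Ici]
  constructor <;> intro h <;> linarith

lemma Phi_zero : cdf stdGauss 0 = 1/2 := by
  have h1 : stdGauss (Iic 0) + stdGauss (Ioi 0) = 1 := by
    rw [← measure_union (Iic_disjoint_Ioi le_rfl) measurableSet_Ioi, Iic_union_Ioi]
    exact measure_univ
  have h2 : stdGauss (Ioi 0) = stdGauss (Ici 0) := measure_congr Ioi_ae_eq_Ici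
  have h3 : stdGauss (Ici 0) = stdGauss (Iic 0) := by rw [← stdGauss_symm 0, neg_zero]
  rw [h2, h3] at h1
  have h4 : stdGauss (Iic 0) = 1/2 := by
    have := ENNReal.eq_div_iff (a := 2) (by norm_num) (by norm_num)
      |>.mpr (show 2 * stdGauss (Iic 0) = 1 by rw [two_mul]; exact h1)
    exact this
  rw [cdf_eq_real, measureReal_def, h4]
  simp [ENNReal.toReal_div]

lemma Phi_pos (y : ℝ) : 0 < cdf stdGauss y :=
  lt_of_le_of_lt (cdf_nonneg stdGauss (y - 1)) (Phi_strictMono (by linarith))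

/-- If `Z ~ N(0, σ²)` with `0 < σ² ≤ 1`, then the p-value `2 Φ(-|Z|)` is
super-uniform: `P(2 Φ(-|Z|) ≤ α) ≤ α` for every `α ∈ [0,1]`. -/
theorem pvalue_superuniform_of_underdispersed
    {Ω : Type*} {mΩ : MeasurableSpace Ω} (μ : Measure Ω) [IsProbabilityMeasure μ]
    (Z : Ω → ℝ) (hZmeas : Measurable Z) (σ2 : ℝ≥0) (hσ2pos : 0 < σ2)
    (hσ2 : σ2 ≤ 1) (hZ : μ.map Z = gaussianReal 0 σ2) :
    ∀ α ∈ Set.Icc (0 : ℝ) 1,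
      μ {ω | 2 * cdf (gaussianReal 0 1) (-|Z ω|) ≤ α} ≤ ENNReal.ofReal α := by
  intro α hα
  obtain ⟨hα0, hα1⟩ := hα
  have hνdef : (gaussianReal 0 1 : Measure ℝ) = stdGauss := rfl
  rw [hνdef]
  rcases eq_or_lt_of_le hα0 with hz | hαpos
  · have hempty : {ω | 2 * cdf stdGauss (-|Z ω|) ≤ α} = ∅ := by
      ext ω
      simp only [mem_setOf_eq, mem_empty_iff_false, iff_false, not_le, ← hz]
      have := Phi_pos (-|Z ω|)
      linarith
    rw [hempty]
    simp
  -- find the quantile q with Φ q = α / 2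
  have hhalf1 : α / 2 < 1 := by linarith
  have hhalf0 : 0 < α / 2 := by linarith
  obtain ⟨a, ha⟩ : ∃ a, cdf stdGauss a < α / 2 :=
    ((tendsto_cdf_atBot stdGauss).eventually_lt_const hhalf0).exists
  obtain ⟨b, hb⟩ : ∃ b, α / 2 < cdf stdGauss b :=
    ((tendsto_cdf_atTop stdGauss).eventually_const_lt hhalf1).exists
  have hab : a ≤ b := by
    by_contra h
    exact absurd ((monotone_cdf stdGauss) (le_of_not_ge h)) (by linarith)
  obtain ⟨q, -, hq⟩ := intermediate_value_Icc hab Phi_continuous.continuousOn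
    (⟨ha.le, hb.le⟩ : α / 2 ∈ Icc (cdf stdGauss a) (cdf stdGauss b))
  have hq0 : q ≤ 0 := by
    rw [← Phi_strictMono.le_iff_le, hq, Phi_zero]
    linarith
  -- rewrite the event
  have hset : {ω | 2 * cdf stdGauss (-|Z ω|) ≤ α} = Z ⁻¹' (Iic q ∪ Ici (-q)) := by
    ext ω
    simp only [mem_setOf_eq, mem_preimage, mem_union, mem_Iic, mem_Ici]
    constructor
    · intro h
      have h1 : cdf stdGauss (-|Z ω|) ≤ cdf stdGauss q := by rw [hq]; linarith
      have h2 : -|Z ω| ≤ q := Phi_strictMono.le_iff_le.mp h1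
      have h3 : -q ≤ |Z ω| := by linarith
      rcases le_abs.mp h3 with h4 | h4
      · right; exact h4
      · left; linarith
    · intro h
      have h3 : -q ≤ |Z ω| := by
        rcases h with h | h
        · exact le_trans (by linarith) (neg_le_abs (Z ω))
        · exact h.trans (le_abs_self _)
      have h2 : -|Z ω| ≤ q := by linarith
      have : cdf stdGauss (-|Z ω|) ≤ cdf stdGauss q := monotone_cdf stdGauss h2
      rw [hq] at this
      linarith
  rw [hset, ← Measure.map_apply hZmeas (measurableSet_Iic.union measurableSet_Ici), hZ]
  -- scaling: gaussianReal 0 σ2 is the image of stdGauss under x ↦ σ x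
  set σ : ℝ := Real.sqrt (σ2 : ℝ) with hσdef
  have hσ0 : 0 < σ := Real.sqrt_pos.mpr (by exact_mod_cast hσ2pos)
  have hσ1 : σ ≤ 1 := by
    rw [hσdef, show (1:ℝ) = Real.sqrt 1 by simp]
    exact Real.sqrt_le_sqrt (by exact_mod_cast hσ2)
  have hmap : Measure.map (fun y : ℝ => σ * y) stdGauss = gaussianReal 0 σ2 := by
    unfold stdGauss
    rw [gaussianReal_map_const_mul σ]
    congr 1
    · ring
    · ext
      push_cast
      rw [mul_one]
      exact Real.sq_sqrt (by positivity)
  rw [← hmap, Measure.map_apply (measurable_const_mul _)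
    (measurableSet_Iic.union measurableSet_Ici)]
  have hsub : (fun y : ℝ => σ * y) ⁻¹' (Iic q ∪ Ici (-q)) ⊆ Iic q ∪ Ici (-q) := by
    intro x hx
    simp only [mem_preimage, mem_union, mem_Iic, mem_Ici] at hx ⊢
    rcases hx with h | h
    · left
      have hx0 : x ≤ 0 := by nlinarith
      nlinarith
    · right
      have hx0 : 0 ≤ x := by nlinarith
      nlinarith
  calc stdGauss ((fun y : ℝ => σ * y) ⁻¹' (Iic q ∪ Ici (-q)))
      ≤ stdGauss (Iic q ∪ Ici (-q)) := measure_mono hsub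
    _ ≤ stdGauss (Iic q) + stdGauss (Ici (-q)) := measure_union_le _ _
    _ = ENNReal.ofReal α := by
        have h1 : stdGauss (Ici (-q)) = stdGauss (Iic q) := by
          rw [← stdGauss_symm (-q), neg_neg]
        rw [h1, ofReal_cdf stdGauss q |>.symm, hq, ← ENNReal.ofReal_add (by linarith) (by linarith)]
        norm_num
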